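/- Let α, β, γ ∈ ℝ, q ∈ [-1,1], and in the algebra Q set W_1 = E + βD_qFD_q, W_2 = E + βFD_q², W_3 = E + qβFD_q², R = (W_1 + γD_q)W_2 + αD_q², Q' = (1-q)D_qW_2 - βD_q². Then for X ∈ {R, Q'}: D_q W_1^{-1} X F W_2 W_3 = X (E + q F D_q W_2). -/

import Mathlib

open Polynomial

noncomputable section

/-- The underlying set of the algebra `Q`: infinite sequences of real polynomials. -/
abbrev PolySeq : Type := ℕ → Polynomial ℝ

/-- Multiplication in the algebra `Q`: `(qmul P Q)_k = ∑_{j ≤ deg Q_k} [Q_k]_j • P_j`. -/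
def qmul (P Q : PolySeq) : PolySeq := fun k => (Q k).sum fun j c => c • P j

/-- The identity `E = (1, x, x², …)`. -/
def Eseq : PolySeq := fun n => X ^ n

/-- `D = (0, 1, x, x², …)`. -/
def Dseq : PolySeq := fun n => if n = 0 then 0 else X ^ (n - 1)

/-- `F = (x, x², x³, …)`. -/
def Fseq : PolySeq := fun n => X ^ (n + 1)

/-- Powers in the algebra `Q`. -/
def qpow (P : PolySeq) : ℕ → PolySeq
  | 0 => Eseq
  | k + 1 => qmul P (qpow P k)

/-- The `q`-number `[n]_q = 1 + q + … + q^{n-1}`, with `[0]_q = 0`. -/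
def qnum (q : ℝ) (n : ℕ) : ℝ := ∑ i ∈ Finset.range n, q ^ i

/-- The q-derivative element `D_q = ([0]_q, [1]_q, [2]_q x, [3]_q x², …)`. -/
def Dq (q : ℝ) : PolySeq := fun n => C (qnum q n) * X ^ (n - 1)

/-- `D_q²`. -/
def Dq2 (q : ℝ) : PolySeq := qmul (Dq q) (Dq q)

/-- `W₁ = E + β D_q F D_q`. -/
def W1 (β q : ℝ) : PolySeq := Eseq + β • qmul (qmul (Dq q) Fseq) (Dq q)

/-- `W₂ = E + β F D_q²`. -/
def W2 (β q : ℝ) : PolySeq := Eseq + β • qmul Fseq (Dq2 q)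

/-- `W₃ = E + qβ F D_q²`. -/
def W3 (β q : ℝ) : PolySeq := Eseq + (q * β) • qmul Fseq (Dq2 q)

/-- `W₄ = E + β D_q² F`. -/
def W4 (β q : ℝ) : PolySeq := Eseq + β • qmul (Dq2 q) Fseq

/-- `R = (W₁ + γ D_q) W₂ + α D_q²`. -/
def RelQ (α β γ q : ℝ) : PolySeq := qmul (W1 β q + γ • Dq q) (W2 β q) + α • Dq2 q

/-- `Q' = (1-q) D_q W₂ - β D_q²`. -/
def Qel (β q : ℝ) : PolySeq := (1 - q) • qmul (Dq q) (W2 β q) - β • Dq2 q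

/-- `S(z) = R + z (D - Q')`. -/
def Sel (α β γ q z : ℝ) : PolySeq := RelQ α β γ q + z • (Dseq - Qel β q)

namespace Aux
def app (P : PolySeq) (p : Polynomial ℝ) : Polynomial ℝ := p.sum fun j c => c • P j

lemma qmul_apply (P Q : PolySeq) (n : ℕ) : qmul P Q n = app P (Q n) := rfl

@[simp] lemma app_zero (P : PolySeq) : app P 0 = 0 := Polynomial.sum_zero_index _

@[simp] lemma app_add (P : PolySeq) (p r : Polynomial ℝ) :
    app P (p + r) = app P p + app P r := by
  unfold app
  apply Polynomial.sum_add_index <;> intros <;> simp [add_smul]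

@[simp] lemma app_smul (P : PolySeq) (c : ℝ) (p : Polynomial ℝ) :
    app P (c • p) = c • app P p := by
  unfold app
  rw [Polynomial.sum_smul_index p c _ (by intro i; simp)]
  unfold Polynomial.sum
  rw [Finset.smul_sum]
  exact Finset.sum_congr rfl fun j _ => mul_smul c _ _

@[simp] lemma app_X_pow (P : PolySeq) (m : ℕ) : app P (X ^ m) = P m := by
  unfold app
  rw [X_pow_eq_monomial, Polynomial.sum_monomial_index _ _ (by simp), one_smul]

@[simp] lemma app_one (P : PolySeq) : app P 1 = P 0 := by
  simpa using app_X_pow P 0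

@[simp] lemma app_X' (P : PolySeq) : app P X = P 1 := by
  simpa using app_X_pow P 1

@[simp] lemma app_C_mul_X_pow (P : PolySeq) (c : ℝ) (m : ℕ) :
    app P (C c * X ^ m) = c • P m := by
  rw [← smul_eq_C_mul, app_smul, app_X_pow]

@[simp] lemma app_C (P : PolySeq) (c : ℝ) : app P (C c) = c • P 0 := by
  simpa using app_C_mul_X_pow P c 0

@[simp] lemma app_C_mul_X (P : PolySeq) (c : ℝ) : app P (C c * X) = c • P 1 := by
  simpa using app_C_mul_X_pow P c 1


@[simp] lemma app_add_left (P P' : PolySeq) (p : Polynomial ℝ) :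
    app (P + P') p = app P p + app P' p := by
  unfold app Polynomial.sum
  simp [smul_add, Finset.sum_add_distrib]

@[simp] lemma app_smul_left (c : ℝ) (P : PolySeq) (p : Polynomial ℝ) :
    app (c • P) p = c • app P p := by
  unfold app Polynomial.sum
  rw [Finset.smul_sum]
  exact Finset.sum_congr rfl fun j _ => smul_comm _ c _

@[simp] lemma app_sub_left (P P' : PolySeq) (p : Polynomial ℝ) :
    app (P - P') p = app P p - app P' p := by
  unfold app Polynomial.sum
  simp [smul_sub, Finset.sum_sub_distrib]

@[simp] lemma app_Eseq (p : Polynomial ℝ) : app Eseq p = p := by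
  induction p using Polynomial.induction_on' with
  | add p r hp hr => simp [hp, hr]
  | monomial m c => rw [← C_mul_X_pow_eq_monomial, app_C_mul_X_pow, Eseq, smul_eq_C_mul]

@[simp] lemma app_qmul (P Q : PolySeq) (p : Polynomial ℝ) :
    app (qmul P Q) p = app P (app Q p) := by
  induction p using Polynomial.induction_on' with
  | add p r hp hr => simp [hp, hr]
  | monomial m c =>
      rw [← C_mul_X_pow_eq_monomial, app_C_mul_X_pow, app_C_mul_X_pow, app_smul,
        qmul_apply]

lemma app_sub (P : PolySeq) (p r : Polynomial ℝ) : app P (p - r) = app P p - app P r := by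
  have := app_add P r (p - r); simp at this; linear_combination -this

lemma app_degree_lt (G : PolySeq) (hG : ∀ j, (G j).degree < j) (p : Polynomial ℝ)
    (hp : p ≠ 0) : (app G p).degree < p.degree := by
  unfold app Polynomial.sum
  refine lt_of_le_of_lt (Polynomial.degree_sum_le _ _) ?_
  rw [Finset.sup_lt_iff (by simpa [Polynomial.degree_eq_bot, bot_lt_iff_ne_bot] using hp)]
  intro j hj
  refine lt_of_lt_of_le (lt_of_le_of_lt (degree_smul_le _ _) (hG j)) ?_
  exact Polynomial.le_degree_of_ne_zero (Polynomial.mem_support_iff.mp hj)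

lemma app_cancel (G : PolySeq) (hG : ∀ j, (G j).degree < j) (c : ℝ)
    (p r : Polynomial ℝ) (h : app (Eseq + c • G) p = app (Eseq + c • G) r) : p = r := by
  simp at h
  by_contra hne
  have hs : p - r ≠ 0 := sub_ne_zero_of_ne hne
  have key : p - r = (-c) • app G (p - r) := by
    rw [app_sub]
    linear_combination (norm := module) h
  have hlt := app_degree_lt G hG (p - r) hs
  have hle : (p - r).degree ≤ (app G (p - r)).degree := by
    conv_lhs => rw [key]
    exact degree_smul_le _ _
  exact absurd hlt (not_lt.mpr hle)
end Aux

namespace Aux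

lemma qnum_zero (q : ℝ) : qnum q 0 = 0 := by simp [qnum]
lemma qnum_one (q : ℝ) : qnum q 1 = 1 := by simp [qnum]
lemma qnum_two (q : ℝ) : qnum q 2 = 1 + q := by simp [qnum, Finset.sum_range_succ]
lemma qnum_three (q : ℝ) : qnum q 3 = 1 + q + q ^ 2 := by
  simp [qnum, Finset.sum_range_succ]
lemma qnum_four (q : ℝ) : qnum q 4 = 1 + q + q ^ 2 + q ^ 3 := by
  simp [qnum, Finset.sum_range_succ]
lemma qnum_five (q : ℝ) : qnum q 5 = 1 + q + q ^ 2 + q ^ 3 + q ^ 4 := by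
  simp [qnum, Finset.sum_range_succ]

lemma qnum_add (q : ℝ) (m k : ℕ) : qnum q (m + k) = qnum q k + q ^ k * qnum q m := by
  unfold qnum
  rw [add_comm m k, Finset.sum_range_add, Finset.mul_sum]
  congr 1
  exact Finset.sum_congr rfl fun i _ => by ring

lemma Dq_apply (q : ℝ) (n : ℕ) : Dq q n = C (qnum q n) * X ^ (n - 1) := rfl

lemma DqW1 (β q : ℝ) : qmul (Dq q) (W1 β q) = qmul (W4 β q) (Dq q) := by
  funext n
  match n with
  | 0 | 1 => simp [qmul_apply, W1, W4, Dq2, Dq, Eseq, Fseq, qnum_zero, qnum_one]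
  | (m+2) =>
    simp only [qmul_apply, app_qmul, app_add_left, app_smul_left, app_add, app_smul,
      app_X_pow, app_C_mul_X_pow, app_zero, app_one, app_X', app_C, app_C_mul_X, app_Eseq, app_sub_left,
      W1, W4, Dq2, Dq, Eseq, Fseq, Pi.add_apply, Pi.smul_apply, Pi.sub_apply,
      Nat.add_sub_cancel, Nat.reduceSubDiff]
    simp only [smul_eq_C_mul, smul_smul]
    simp only [qnum_add, qnum_zero, qnum_one, qnum_two, map_add, map_mul, map_one,
      map_zero, map_pow, map_sub]
    ring

lemma key_Q (β q : ℝ) :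
    qmul (qmul (qmul (qmul (Dq q) (Qel β q)) Fseq) (W2 β q)) (W3 β q)
      = qmul (qmul (W4 β q) (Qel β q)) (Eseq + q • qmul (qmul Fseq (Dq q)) (W2 β q)) := by
  funext n
  match n with
  | 0 | 1 | 2 | 3 =>
    simp only [qmul_apply, app_qmul, app_add_left, app_smul_left, app_sub_left, app_sub,
      app_add, app_smul, app_X_pow, app_C_mul_X_pow, app_zero, app_one, app_X', app_C,
      app_C_mul_X, app_Eseq, Qel, W2, W3, W4, Dq2, Dq, Eseq, Fseq,
      Pi.add_apply, Pi.smul_apply, Pi.sub_apply, Nat.add_sub_cancel, Nat.reduceSubDiff]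
    simp only [smul_eq_C_mul, smul_smul]
    simp only [qnum_add, qnum_zero, qnum_one, qnum_two, qnum_three, qnum_four, qnum_five,
      map_add, map_mul, map_one, map_zero, map_pow, map_sub]
    ring
  | (m+4) =>
    simp only [qmul_apply, app_qmul, app_add_left, app_smul_left, app_sub_left, app_sub,
      app_add, app_smul, app_X_pow, app_C_mul_X_pow, app_zero, app_one, app_X', app_C,
      app_C_mul_X, app_Eseq, Qel, W2, W3, W4, Dq2, Dq, Eseq, Fseq,
      Pi.add_apply, Pi.smul_apply, Pi.sub_apply, Nat.add_sub_cancel, Nat.reduceSubDiff]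
    simp only [smul_eq_C_mul, smul_smul]
    simp only [qnum_add, qnum_zero, qnum_one, qnum_two, qnum_three, qnum_four, qnum_five,
      map_add, map_mul, map_one, map_zero, map_pow, map_sub]
    ring


lemma key_R (α β γ q : ℝ) :
    qmul (qmul (qmul (qmul (Dq q) (RelQ α β γ q)) Fseq) (W2 β q)) (W3 β q)
      = qmul (qmul (W4 β q) (RelQ α β γ q)) (Eseq + q • qmul (qmul Fseq (Dq q)) (W2 β q)) := by
  funext n
  match n with
  | 0 | 1 | 2 | 3 =>
    simp only [qmul_apply, app_qmul, app_add_left, app_smul_left, app_sub_left, app_sub,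
      app_add, app_smul, app_X_pow, app_C_mul_X_pow, app_zero, app_one, app_X', app_C,
      app_C_mul_X, app_Eseq, RelQ, W1, Qel, W2, W3, W4, Dq2, Dq, Eseq, Fseq,
      Pi.add_apply, Pi.smul_apply, Pi.sub_apply, Nat.add_sub_cancel, Nat.reduceSubDiff]
    simp only [smul_eq_C_mul, smul_smul]
    simp only [qnum_add, qnum_zero, qnum_one, qnum_two, qnum_three, qnum_four, qnum_five,
      map_add, map_mul, map_one, map_zero, map_pow, map_sub]
    ring
  | (m+4) =>
    simp only [qmul_apply, app_qmul, app_add_left, app_smul_left, app_sub_left, app_sub,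
      app_add, app_smul, app_X_pow, app_C_mul_X_pow, app_zero, app_one, app_X', app_C,
      app_C_mul_X, app_Eseq, RelQ, W1, Qel, W2, W3, W4, Dq2, Dq, Eseq, Fseq,
      Pi.add_apply, Pi.smul_apply, Pi.sub_apply, Nat.add_sub_cancel, Nat.reduceSubDiff]
    simp only [smul_eq_C_mul, smul_smul]
    simp only [qnum_add, qnum_zero, qnum_one, qnum_two, qnum_three, qnum_four, qnum_five,
      map_add, map_mul, map_one, map_zero, map_pow, map_sub]
    ring


lemma qmul_assoc (P Q R : PolySeq) : qmul (qmul P Q) R = qmul P (qmul Q R) := by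
  funext n; simp [qmul_apply, app_qmul]

lemma qmul_Eseq (P : PolySeq) : qmul P Eseq = P := by
  funext n; simp [qmul_apply, Eseq]

lemma W4G_deg (β q : ℝ) : ∀ j : ℕ, ((qmul (Dq2 q) Fseq) j).degree < (j : WithBot ℕ) := by
  intro j
  match j with
  | 0 =>
    have h0 : (qmul (Dq2 q) Fseq) 0 = 0 := by
      simp [qmul_apply, app_qmul, Dq2, Dq, Fseq, qnum_zero, qnum_one]
    rw [h0, degree_zero]
    exact WithBot.bot_lt_coe 0
  | (i+1) =>
    have h0 : (qmul (Dq2 q) Fseq) (i+1)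
        = qnum q (i+2) • (C (qnum q (i+1)) * X ^ i) := by
      simp [qmul_apply, app_qmul, Dq2, Dq, Fseq, Nat.add_sub_cancel]
    rw [h0]
    refine lt_of_le_of_lt (degree_smul_le _ _) ?_
    rw [C_mul_X_pow_eq_monomial]
    refine lt_of_le_of_lt (degree_monomial_le _ _) ?_
    exact_mod_cast Nat.lt_succ_self i

lemma W4_cancel (β q : ℝ) {A B : PolySeq} (h : qmul (W4 β q) A = qmul (W4 β q) B) :
    A = B := by
  funext n
  exact app_cancel _ (W4G_deg β q) β (A n) (B n) (congrFun h n)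
end Aux

/-- For `X ∈ {R, Q'}`: `D_q W₁⁻¹ X F W₂ W₃ = X (E + q F D_q W₂)`. -/
theorem stmt16 (α β γ q : ℝ) (hq : q ∈ Set.Icc (-1 : ℝ) 1)
    (W1inv : PolySeq) (h1 : qmul (W1 β q) W1inv = Eseq) (h2 : qmul W1inv (W1 β q) = Eseq) :
    ∀ Xc ∈ ({RelQ α β γ q, Qel β q} : Set PolySeq),
      qmul (qmul (qmul (qmul (qmul (Dq q) W1inv) Xc) Fseq) (W2 β q)) (W3 β q) =
        qmul Xc (Eseq + q • qmul (qmul Fseq (Dq q)) (W2 β q)) := by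
  intro Xc hXc
  apply Aux.W4_cancel β q
  simp only [← Aux.qmul_assoc]
  rw [← Aux.DqW1, Aux.qmul_assoc (Dq q) (W1 β q) W1inv, h1, Aux.qmul_Eseq]
  rcases hXc with h | h <;> rw [h]
  · exact Aux.key_R α β γ q
  · exact Aux.key_Q β q
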